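/- Consider the scalar case (n_i = 1, N = n). Let f satisfy Assumption 1, u satisfy Assumption 2, and let f be strongly convex. Let (x^k) be the sequence generated by the RCD-IHT algorithm, let x* be a limit point of (x^k), and let κ denote the number of changes in expectation of I^k = I(x^k) as k → ∞. Then κ · δ ≤ E[F(x⁰) − F(x*)], hence κ ≤ ⌈E[F(x⁰) − F(x*)]/δ⌉, where δ = (1/n) · min{ min_{i : λ_i > 0} μ_i λ_i / M_i, min_{j ∈ supp(x⁰)} (μ_j/2)|x⁰_{(j)}|² }. -/

import Mathlib

open scoped RealInnerProductSpace
open Finset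

/-- The weighted ℓ₀ quasinorm `‖x‖_{0,λ} = ∑ᵢ λᵢ‖xᵢ‖₀` in the scalar case. -/
noncomputable def l0s {n : ℕ} (lam : Fin n → ℝ) (x : EuclideanSpace ℝ (Fin n)) : ℝ :=
  ∑ j, if x j ≠ 0 then lam j else 0

/-- The index set `I(x) = supp(x) ∪ {j : λⱼ = 0}` in the scalar case. -/
def isetS {n : ℕ} (lam : Fin n → ℝ) (x : EuclideanSpace ℝ (Fin n)) : Set (Fin n) :=
  {j | x j ≠ 0 ∨ lam j = 0}

/-- One iteration of (RCD-IHT) in the scalar case: coordinate `i` is replaced by `T i x`. -/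
noncomputable def stepS {n : ℕ} (T : Fin n → EuclideanSpace ℝ (Fin n) → ℝ)
    (i : Fin n) (x : EuclideanSpace ℝ (Fin n)) : EuclideanSpace ℝ (Fin n) :=
  x + EuclideanSpace.single i (T i x - x i)

/-- A "change of `I(x)` in expectation" at the point `x`:
`E[|I⁺ \ I| + |I \ I⁺|] = (1/n)∑ᵢ (|I(xᵢ⁺) \ I(x)| + |I(x) \ I(xᵢ⁺)|) > 0`. -/
noncomputable def chgS {n : ℕ} (lam : Fin n → ℝ)
    (T : Fin n → EuclideanSpace ℝ (Fin n) → ℝ) (x : EuclideanSpace ℝ (Fin n)) : Prop :=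
  0 < (1 / n : ℝ) * ∑ i : Fin n,
    (((isetS lam (stepS T i x) \ isetS lam x).ncard : ℝ) +
      ((isetS lam x \ isetS lam (stepS T i x)).ncard : ℝ))

/-- Assumption 2 in the scalar case: `uᵢ(·;·) : ℝ × ℝⁿ → ℝ` with derivatives `guᵢ`,
Lipschitz constants `Mᵢ > Lᵢ` and curvature constants `μᵢ ∈ (0, Mᵢ - Lᵢ]`. -/
structure ScalarApproxAssumption {n : ℕ}
    (f : EuclideanSpace ℝ (Fin n) → ℝ)
    (g : EuclideanSpace ℝ (Fin n) → EuclideanSpace ℝ (Fin n))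
    (L : Fin n → ℝ)
    (u : Fin n → ℝ → EuclideanSpace ℝ (Fin n) → ℝ)
    (gu : Fin n → ℝ → EuclideanSpace ℝ (Fin n) → ℝ)
    (M μ : Fin n → ℝ) : Prop where
  strictConvexOn : ∀ i x, StrictConvexOn ℝ Set.univ (fun y : ℝ => u i y x)
  hasDeriv : ∀ i x y, HasDerivAt (fun w => u i w x) (gu i y x) y
  continuous_second : ∀ i y, Continuous fun x => u i y x
  value_at : ∀ i x, u i (x i) x = f x
  deriv_at : ∀ i x, gu i (x i) x = g x i
  lipschitz_deriv : ∀ i x y y', |gu i y x - gu i y' x| ≤ M i * |y - y'|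
  M_gt_L : ∀ i, L i < M i
  mu_pos : ∀ i, 0 < μ i
  mu_le : ∀ i, μ i ≤ M i - L i
  lower_bound : ∀ i x y,
    f (x + EuclideanSpace.single i (y - x i)) + μ i / 2 * (y - x i) ^ 2 ≤ u i y x

section Det
variable {n : ℕ} {lam : Fin n → ℝ}
  {f : EuclideanSpace ℝ (Fin n) → ℝ}
  {g : EuclideanSpace ℝ (Fin n) → EuclideanSpace ℝ (Fin n)}
  {L : Fin n → ℝ}
  {u : Fin n → ℝ → EuclideanSpace ℝ (Fin n) → ℝ}
  {gu : Fin n → ℝ → EuclideanSpace ℝ (Fin n) → ℝ}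
  {M μ : Fin n → ℝ}
  {T : Fin n → EuclideanSpace ℝ (Fin n) → ℝ}

/-- The objective. -/
noncomputable def FnF (lam : Fin n → ℝ) (f : EuclideanSpace ℝ (Fin n) → ℝ)
    (x : EuclideanSpace ℝ (Fin n)) : ℝ := f x + l0s lam x

lemma stepS_apply (T : Fin n → EuclideanSpace ℝ (Fin n) → ℝ) (i : Fin n)
    (x : EuclideanSpace ℝ (Fin n)) (j : Fin n) :
    stepS T i x j = if j = i then T i x else x j := by
  show x j + EuclideanSpace.single i (T i x - x i) j = _
  rw [EuclideanSpace.single_apply]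
  split <;> rename_i h
  · subst h; ring
  · ring

lemma l0s_nonneg (hlam : ∀ i, 0 ≤ lam i) (x : EuclideanSpace ℝ (Fin n)) : 0 ≤ l0s lam x :=
  Finset.sum_nonneg fun j _ => by split <;> simp [hlam j]

lemma l0s_step (i : Fin n) (x : EuclideanSpace ℝ (Fin n)) :
    l0s lam (stepS T i x) =
      l0s lam x - (if x i ≠ 0 then lam i else 0) + (if T i x ≠ 0 then lam i else 0) := by
  unfold l0s
  rw [Finset.sum_eq_sum_sdiff_singleton_add (Finset.mem_univ i),
    Finset.sum_eq_sum_sdiff_singleton_add (Finset.mem_univ i)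
      (fun j => if x j ≠ 0 then lam j else 0)]
  have h1 : ∀ j ∈ Finset.univ \ {i}, (if stepS T i x j ≠ 0 then lam j else 0)
      = (if x j ≠ 0 then lam j else 0) := by
    intro j hj
    rw [Finset.mem_sdiff, Finset.mem_singleton] at hj
    rw [stepS_apply, if_neg hj.2]
  rw [Finset.sum_congr rfl h1, stepS_apply, if_pos rfl]
  ring

lemma descent (hu : ScalarApproxAssumption f g L u gu M μ)
    (hT : ∀ (i : Fin n) (x : EuclideanSpace ℝ (Fin n)) (y : ℝ),
      u i (T i x) x + lam i * (if T i x ≠ 0 then (1:ℝ) else 0)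
        ≤ u i y x + lam i * (if y ≠ 0 then (1:ℝ) else 0))
    (i : Fin n) (x : EuclideanSpace ℝ (Fin n)) :
    FnF lam f (stepS T i x) + μ i / 2 * (T i x - x i) ^ 2 ≤ FnF lam f x := by
  have h1 := hT i x (x i)
  rw [hu.value_at i x] at h1
  have h2 := hu.lower_bound i x (T i x)
  have h3 : stepS T i x = x + EuclideanSpace.single i (T i x - x i) := rfl
  rw [← h3] at h2
  have h4 := l0s_step (lam := lam) (T := T) i x
  unfold FnF
  have e1 : (if T i x ≠ 0 then lam i else 0) = lam i * (if T i x ≠ 0 then (1:ℝ) else 0) := by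
    split <;> ring
  have e2 : (if x i ≠ 0 then lam i else 0) = lam i * (if x i ≠ 0 then (1:ℝ) else 0) := by
    split <;> ring
  rw [h4, e1, e2]
  linarith

lemma thresh (hu : ScalarApproxAssumption f g L u gu M μ) (hL : ∀ i, 0 < L i)
    (hT : ∀ (i : Fin n) (x : EuclideanSpace ℝ (Fin n)) (y : ℝ),
      u i (T i x) x + lam i * (if T i x ≠ 0 then (1:ℝ) else 0)
        ≤ u i y x + lam i * (if y ≠ 0 then (1:ℝ) else 0))
    (i : Fin n) (x : EuclideanSpace ℝ (Fin n)) (ht : T i x ≠ 0) :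
    lam i ≤ M i / 2 * (T i x) ^ 2 := by
  set t := T i x with htdef
  have hM : 0 < M i := lt_trans (hL i) (hu.M_gt_L i)
  -- local minimum of `u i · x` at `t`
  have hloc : IsLocalMin (fun y => u i y x) t := by
    have hmem : {y : ℝ | y ≠ 0} ∈ nhds t := isOpen_compl_singleton.mem_nhds ht
    filter_upwards [hmem] with y hy
    have := hT i x y
    rw [if_pos ht, if_pos hy] at this
    linarith
  have hder0 : gu i t x = 0 := hloc.hasDerivAt_eq_zero (hu.hasDeriv i x t)
  -- the auxiliary convex function
  set h : ℝ → ℝ := fun w => M i / 2 * w ^ 2 - u i w x with hh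
  have hd : ∀ w, HasDerivAt h (M i * w - gu i w x) w := by
    intro w
    have h1 : HasDerivAt (fun w : ℝ => M i / 2 * w ^ 2) (M i * w) w := by
      have := (hasDerivAt_pow 2 w).const_mul (M i / 2)
      simpa using this.congr_deriv (by ring)
    exact h1.sub (hu.hasDeriv i x w)
  have hmono : Monotone fun w => M i * w - gu i w x := by
    intro a b hab
    show M i * a - gu i a x ≤ M i * b - gu i b x
    have := hu.lipschitz_deriv i x b a
    have habs : gu i b x - gu i a x ≤ M i * (b - a) := by
      have h2 : |b - a| = b - a := abs_of_nonneg (by linarith)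
      calc gu i b x - gu i a x ≤ |gu i b x - gu i a x| := le_abs_self _
        _ ≤ M i * |b - a| := this
        _ = M i * (b - a) := by rw [h2]
    linarith
  have hconv : ConvexOn ℝ Set.univ h := by
    have hdd : deriv h = fun w => M i * w - gu i w x := funext fun w => (hd w).deriv
    exact Monotone.convexOn_univ_of_deriv (fun w => (hd w).differentiableAt) (hdd ▸ hmono)
  -- gradient inequality gives `u 0 ≤ u t + M/2 t²`
  have hkey : u i 0 x ≤ u i t x + M i / 2 * t ^ 2 := by
    rcases lt_or_gt_of_ne ht with hlt | hgt
    · -- t < 0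
      have := hconv.le_slope_of_hasDerivAt (Set.mem_univ t) (Set.mem_univ 0) hlt
        ((hd t).congr_deriv (by rw [hder0]; ring) : HasDerivAt h (M i * t) t)
      rw [slope_def_field] at this
      have hpos : (0:ℝ) < 0 - t := by linarith
      have h0 : M i * t * (0 - t) ≤ h 0 - h t := by
        rw [← le_div_iff₀ hpos]; exact this
      simp only [hh] at h0
      nlinarith
    · -- 0 < t
      have := hconv.slope_le_of_hasDerivAt (Set.mem_univ 0) (Set.mem_univ t) hgt
        ((hd t).congr_deriv (by rw [hder0]; ring) : HasDerivAt h (M i * t) t)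
      rw [slope_def_field] at this
      have hpos : (0:ℝ) < t - 0 := by linarith
      have h0 : h t - h 0 ≤ M i * t * (t - 0) := by
        rw [← div_le_iff₀ hpos]; exact this
      simp only [hh] at h0
      nlinarith
  -- compare with `y = 0`
  have h5 := hT i x 0
  rw [if_pos ht, if_neg (by simp)] at h5
  simp only [← htdef] at h5 ⊢
  nlinarith


/-- The set whose infimum defines `n·δ`. -/
def SsetD (lam M μ : Fin n → ℝ) (x0 : EuclideanSpace ℝ (Fin n)) : Set ℝ :=
  {t : ℝ | ∃ i, 0 < lam i ∧ t = μ i * lam i / M i} ∪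
    {t : ℝ | ∃ j, x0 j ≠ 0 ∧ t = μ j / 2 * (x0 j) ^ 2}

lemma SsetD_finite (lam M μ : Fin n → ℝ) (x0 : EuclideanSpace ℝ (Fin n)) :
    (SsetD lam M μ x0).Finite := by
  apply Set.Finite.subset (((Set.finite_range fun i => μ i * lam i / M i).union
    (Set.finite_range fun j => μ j / 2 * (x0 j) ^ 2)))
  rintro t (⟨i, _, rfl⟩ | ⟨j, _, rfl⟩)
  · exact Or.inl ⟨i, rfl⟩
  · exact Or.inr ⟨j, rfl⟩

lemma SsetD_pos (hlam : ∀ i, 0 ≤ lam i) (hML : ∀ i, L i < M i) (hL : ∀ i, 0 < L i)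
    (hμ : ∀ i, 0 < μ i) (x0 : EuclideanSpace ℝ (Fin n)) :
    ∀ t ∈ SsetD lam M μ x0, 0 < t := by
  rintro t (⟨i, hi, rfl⟩ | ⟨j, hj, rfl⟩)
  · exact div_pos (mul_pos (hμ i) hi) (lt_trans (hL i) (hML i))
  · have h2 : (0:ℝ) < (x0 j) ^ 2 :=
      lt_of_le_of_ne (sq_nonneg _) (Ne.symm (pow_ne_zero 2 hj))
    exact mul_pos (div_pos (hμ j) two_pos) h2

/-- The invariant: every nonzero coordinate with positive weight has large magnitude. -/
def InvP (lam μ : Fin n → ℝ) (c : ℝ) (x : EuclideanSpace ℝ (Fin n)) : Prop :=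
  ∀ i, 0 < lam i → x i ≠ 0 → c ≤ μ i / 2 * (x i) ^ 2

lemma inv_x0 (lam M μ : Fin n → ℝ) (x0 : EuclideanSpace ℝ (Fin n)) :
    InvP lam μ (sInf (SsetD lam M μ x0)) x0 := fun i _ hi =>
  csInf_le (SsetD_finite lam M μ x0).bddBelow (Or.inr ⟨i, hi, rfl⟩)

lemma inv_step (hu : ScalarApproxAssumption f g L u gu M μ) (hL : ∀ i, 0 < L i)
    (hT : ∀ (i : Fin n) (x : EuclideanSpace ℝ (Fin n)) (y : ℝ),
      u i (T i x) x + lam i * (if T i x ≠ 0 then (1:ℝ) else 0)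
        ≤ u i y x + lam i * (if y ≠ 0 then (1:ℝ) else 0))
    (x0 : EuclideanSpace ℝ (Fin n)) (i : Fin n) (x : EuclideanSpace ℝ (Fin n))
    (hx : InvP lam μ (sInf (SsetD lam M μ x0)) x) :
    InvP lam μ (sInf (SsetD lam M μ x0)) (stepS T i x) := by
  intro j hj hj0
  rw [stepS_apply] at hj0 ⊢
  by_cases hji : j = i
  · rw [if_pos hji] at hj0 ⊢
    subst hji
    have hM : 0 < M j := lt_trans (hL j) (hu.M_gt_L j)
    have h1 : lam j ≤ M j / 2 * (T j x) ^ 2 := thresh hu hL hT j x hj0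
    have h2 : sInf (SsetD lam M μ x0) ≤ μ j * lam j / M j :=
      csInf_le (SsetD_finite lam M μ x0).bddBelow (Or.inl ⟨j, hj, rfl⟩)
    have h3 : μ j * lam j / M j ≤ μ j / 2 * (T j x) ^ 2 := by
      rw [div_le_iff₀ hM] at *
      nlinarith [hu.mu_pos j, mul_le_mul_of_nonneg_left h1 (le_of_lt (hu.mu_pos j))]
    linarith
  · rw [if_neg hji] at hj0 ⊢
    exact hx j hj hj0

lemma chg_sum_bound (hlam : ∀ i, 0 ≤ lam i)
    (hu : ScalarApproxAssumption f g L u gu M μ) (hL : ∀ i, 0 < L i)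
    (hT : ∀ (i : Fin n) (x : EuclideanSpace ℝ (Fin n)) (y : ℝ),
      u i (T i x) x + lam i * (if T i x ≠ 0 then (1:ℝ) else 0)
        ≤ u i y x + lam i * (if y ≠ 0 then (1:ℝ) else 0))
    (x0 : EuclideanSpace ℝ (Fin n)) (x : EuclideanSpace ℝ (Fin n))
    (hx : InvP lam μ (sInf (SsetD lam M μ x0)) x) (hchg : chgS lam T x) :
    sInf (SsetD lam M μ x0) ≤ ∑ i, (FnF lam f x - FnF lam f (stepS T i x)) := by
  have hterm_nonneg : ∀ i : Fin n, 0 ≤ FnF lam f x - FnF lam f (stepS T i x) := by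
    intro i
    have := descent hu hT i x
    nlinarith [sq_nonneg (T i x - x i), hu.mu_pos i]
  -- extract a coordinate where the index set changes
  obtain ⟨i, hi⟩ : ∃ i : Fin n,
      (0:ℝ) < ((isetS lam (stepS T i x) \ isetS lam x).ncard : ℝ) +
        ((isetS lam x \ isetS lam (stepS T i x)).ncard : ℝ) := by
    by_contra hcon
    push_neg at hcon
    have : ∑ i : Fin n, (((isetS lam (stepS T i x) \ isetS lam x).ncard : ℝ) +
        ((isetS lam x \ isetS lam (stepS T i x)).ncard : ℝ)) ≤ 0 :=
      Finset.sum_nonpos fun i _ => hcon i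
    unfold chgS at hchg
    have h2 : (1 / n : ℝ) * ∑ i : Fin n, (((isetS lam (stepS T i x) \ isetS lam x).ncard : ℝ) +
        ((isetS lam x \ isetS lam (stepS T i x)).ncard : ℝ)) ≤ (1 / n : ℝ) * 0 :=
      mul_le_mul_of_nonneg_left this (by positivity)
    rw [mul_zero] at h2
    linarith
  -- membership facts: the symmetric difference is contained in {i}
  have hsame : ∀ j : Fin n, j ≠ i → (j ∈ isetS lam (stepS T i x) ↔ j ∈ isetS lam x) := by
    intro j hji
    unfold isetS
    rw [Set.mem_setOf_eq, Set.mem_setOf_eq, stepS_apply, if_neg hji]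
  have hkey : sInf (SsetD lam M μ x0) ≤ FnF lam f x - FnF lam f (stepS T i x) := by
    have hdec := descent hu hT i x
    rcases lt_or_ge (0:ℝ) ((isetS lam (stepS T i x) \ isetS lam x).ncard : ℝ) with hc | hc
    · -- addition of a coordinate
      have hne : (isetS lam (stepS T i x) \ isetS lam x).Nonempty :=
        Set.nonempty_of_ncard_ne_zero (by exact_mod_cast ne_of_gt hc)
      obtain ⟨j, hj⟩ := hne
      have hji : j = i := by
        by_contra hji
        rw [Set.mem_diff] at hj
        exact hj.2 ((hsame j hji).mp hj.1)
      subst hji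
      rw [Set.mem_diff] at hj
      obtain ⟨hj1, hj2⟩ := hj
      unfold isetS at hj1 hj2
      rw [Set.mem_setOf_eq] at hj1 hj2
      push_neg at hj2
      obtain ⟨hx0, hlam0⟩ := hj2
      have ht0 : T j x ≠ 0 := by
        rcases hj1 with h | h
        · rwa [stepS_apply, if_pos rfl] at h
        · exact absurd h hlam0
      have hlampos : 0 < lam j := lt_of_le_of_ne (hlam j) (Ne.symm hlam0)
      have hx0' : x j = 0 := hx0
      have hM : 0 < M j := lt_trans (hL j) (hu.M_gt_L j)
      have h1 : lam j ≤ M j / 2 * (T j x) ^ 2 := thresh hu hL hT j x ht0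
      have h2 : sInf (SsetD lam M μ x0) ≤ μ j * lam j / M j :=
        csInf_le (SsetD_finite lam M μ x0).bddBelow (Or.inl ⟨j, hlampos, rfl⟩)
      have h3 : μ j * lam j / M j ≤ μ j / 2 * (T j x) ^ 2 := by
        rw [div_le_iff₀ hM] at *
        nlinarith [hu.mu_pos j, mul_le_mul_of_nonneg_left h1 (le_of_lt (hu.mu_pos j))]
      rw [hx0'] at hdec
      nlinarith
    · -- removal of a coordinate
      have hc2 : (0:ℝ) < ((isetS lam x \ isetS lam (stepS T i x)).ncard : ℝ) := by linarith
      have hne : (isetS lam x \ isetS lam (stepS T i x)).Nonempty :=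
        Set.nonempty_of_ncard_ne_zero (by exact_mod_cast ne_of_gt hc2)
      obtain ⟨j, hj⟩ := hne
      have hji : j = i := by
        by_contra hji
        rw [Set.mem_diff] at hj
        exact hj.2 ((hsame j hji).mpr hj.1)
      subst hji
      rw [Set.mem_diff] at hj
      obtain ⟨hj1, hj2⟩ := hj
      unfold isetS at hj1 hj2
      rw [Set.mem_setOf_eq] at hj1 hj2
      push_neg at hj2
      obtain ⟨hstep0, hlam0⟩ := hj2
      have ht0 : T j x = 0 := by
        have := hstep0
        rwa [stepS_apply, if_pos rfl] at this
      have hxj : x j ≠ 0 := by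
        rcases hj1 with h | h
        · exact h
        · exact absurd h hlam0
      have hlampos : 0 < lam j := lt_of_le_of_ne (hlam j) (Ne.symm hlam0)
      have h1 := hx j hlampos hxj
      rw [ht0] at hdec
      nlinarith
  calc sInf (SsetD lam M μ x0) ≤ FnF lam f x - FnF lam f (stepS T i x) := hkey
    _ ≤ ∑ i, (FnF lam f x - FnF lam f (stepS T i x)) :=
      Finset.single_le_sum (fun i _ => hterm_nonneg i) (Finset.mem_univ i)

end Det


theorem sum_snoc' {n k : ℕ} (q : (Fin (k+1) → Fin n) → ℝ) :
    ∑ v : Fin (k+1) → Fin n, q v = ∑ w : Fin k → Fin n, ∑ i : Fin n, q (Fin.snoc w i) := by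
  have h1 : ∑ v : Fin (k+1) → Fin n, q v
      = ∑ p : Fin n × (Fin k → Fin n), q (Fin.snoc p.2 p.1) := by
    refine (Fintype.sum_equiv (Fin.snocEquiv (fun _ => Fin n)) _ _ (fun p => ?_)).symm
    congr 1
  rw [h1, Fintype.sum_prod_type, Finset.sum_comm]

section Lsc
variable {n : ℕ} {lam : Fin n → ℝ} {f : EuclideanSpace ℝ (Fin n) → ℝ}
  {g : EuclideanSpace ℝ (Fin n) → EuclideanSpace ℝ (Fin n)}

open scoped RealInnerProductSpace

lemma Fn_lsc (hlam : ∀ i, 0 ≤ lam i) (hf : Continuous f) :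
    LowerSemicontinuous (FnF lam f) := by
  have hl0 : LowerSemicontinuous (l0s lam) := by
    apply lowerSemicontinuous_sum
    intro j _
    intro x y hy
    simp only at hy
    by_cases hx : x j ≠ 0
    · rw [if_pos hx] at hy
      have hopen : {z : EuclideanSpace ℝ (Fin n) | z j ≠ 0} ∈ nhds x := by
        have h1 : IsOpen {z : EuclideanSpace ℝ (Fin n) | z j ≠ 0} :=
          IsOpen.preimage (EuclideanSpace.proj j).continuous isOpen_compl_singleton
        exact h1.mem_nhds hx
      filter_upwards [hopen] with z hz
      show y < if z j ≠ 0 then lam j else 0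
      rw [if_pos hz]; exact hy
    · rw [if_neg hx] at hy
      filter_upwards with z
      show y < if z j ≠ 0 then lam j else 0
      split
      · exact lt_of_lt_of_le hy (hlam j)
      · exact hy
  exact (hf.lowerSemicontinuous).add hl0

lemma Fn_limit_le (hlsc : LowerSemicontinuous (FnF lam f))
    (xs : ℕ → EuclideanSpace ℝ (Fin n)) (xstar : EuclideanSpace ℝ (Fin n))
    (hmono : ∀ k, FnF lam f (xs (k+1)) ≤ FnF lam f (xs k))
    (hclu : MapClusterPt xstar Filter.atTop xs) (k : ℕ) :
    FnF lam f xstar ≤ FnF lam f (xs k) := by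
  by_contra hcon
  push_neg at hcon
  have hmono' : ∀ a b : ℕ, a ≤ b → FnF lam f (xs b) ≤ FnF lam f (xs a) := by
    intro a b hab
    induction b, hab using Nat.le_induction with
    | base => exact le_refl _
    | succ m hm ih => exact le_trans (hmono m) ih
  have hev := hlsc xstar (FnF lam f (xs k)) hcon
  have hfreq := (mapClusterPt_iff_frequently.mp hclu) _ hev
  obtain ⟨m, hm, hlt⟩ := (Filter.frequently_atTop.mp hfreq) k
  exact absurd (hmono' k m hm) (not_le.mpr hlt)

lemma Fn_lower (hlam : ∀ i, 0 ≤ lam i) {σ : ℝ} (hσ : 0 < σ)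
    {x0 : EuclideanSpace ℝ (Fin n)}
    (hstrong1 : ∀ y, f x0 + ⟪g x0, y - x0⟫ + σ / 2 * ‖y - x0‖ ^ 2 ≤ f y)
    (y : EuclideanSpace ℝ (Fin n)) :
    f x0 - ‖g x0‖ ^ 2 / (2 * σ) ≤ FnF lam f y := by
  have h1 := hstrong1 y
  have h2 : -(‖g x0‖ * ‖y - x0‖) ≤ ⟪g x0, y - x0⟫ := by
    have := abs_real_inner_le_norm (g x0) (y - x0)
    have h3 := neg_abs_le ⟪g x0, y - x0⟫
    linarith
  have h3 := l0s_nonneg hlam y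
  set d := ‖g x0‖ ^ 2 / (2 * σ) with hd
  have hd2 : ‖g x0‖ ^ 2 = 2 * σ * d := by rw [hd]; field_simp
  unfold FnF
  nlinarith [sq_nonneg (σ * ‖y - x0‖ - ‖g x0‖), hσ]

end Lsc

section Prob
open MeasureTheory Filter
open scoped ENNReal

variable {n : ℕ} {Ω : Type*} [MeasurableSpace Ω]

/-- The deterministic unfolding of the RCD-IHT iterates. -/
noncomputable def PhiS (T : Fin n → EuclideanSpace ℝ (Fin n) → ℝ)
    (x0 : EuclideanSpace ℝ (Fin n)) : (k : ℕ) → (Fin k → Fin n) → EuclideanSpace ℝ (Fin n)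
  | 0, _ => x0
  | (k+1), v => stepS T (v (Fin.last k)) (PhiS T x0 k (fun j => v j.castSucc))

/-- The vector of the first `k` coordinate choices. -/
def Vk (ik : ℕ → Ω → Fin n) (k : ℕ) (ω : Ω) : Fin k → Fin n := fun j => ik j ω

lemma measurable_Vk {ik : ℕ → Ω → Fin n} (hmeas : ∀ k, Measurable (ik k)) (k : ℕ) :
    Measurable (Vk ik k) :=
  measurable_pi_lambda _ fun j => hmeas j

lemma PhiS_snoc (T : Fin n → EuclideanSpace ℝ (Fin n) → ℝ) (x0 : EuclideanSpace ℝ (Fin n))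
    (k : ℕ) (w : Fin k → Fin n) (i : Fin n) :
    PhiS T x0 (k+1) (Fin.snoc w i) = stepS T i (PhiS T x0 k w) := by
  show stepS T ((Fin.snoc w i : Fin (k+1) → Fin n) (Fin.last k)) _ = _
  rw [Fin.snoc_last]
  have h1 : (fun j : Fin k => (Fin.snoc w i : Fin (k+1) → Fin n) j.castSucc) = w :=
    funext fun j => by simp
  rw [h1]

lemma measure_Vk {ik : ℕ → Ω → Fin n} {P : Measure Ω}
    (hindep : ProbabilityTheory.iIndepFun ik P)
    (hunif : ∀ (k : ℕ) (i : Fin n), P {ω | ik k ω = i} = (n : ENNReal)⁻¹)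
    (k : ℕ) (v : Fin k → Fin n) :
    P {ω | Vk ik k ω = v} = (n : ENNReal)⁻¹ ^ k := by
  classical
  set st : (j : ℕ) → Set (Fin n) :=
    fun j => if h : j < k then {v ⟨j, h⟩} else Set.univ with hst
  have hseteq : {ω | Vk ik k ω = v} = ⋂ j ∈ Finset.range k, (ik j) ⁻¹' (st j) := by
    ext ω
    simp only [Set.mem_setOf_eq, Set.mem_iInter, Finset.mem_range, Set.mem_preimage, funext_iff]
    constructor
    · intro h j hj
      rw [hst]
      simp only [dif_pos hj, Set.mem_singleton_iff]
      exact h ⟨j, hj⟩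
    · intro h j
      have h2 := h j.val j.isLt
      rw [hst] at h2
      simp only [dif_pos j.isLt, Set.mem_singleton_iff] at h2
      exact h2
  rw [hseteq, hindep.measure_inter_preimage_eq_mul (Finset.range k)
    (fun j _ => by
      rw [hst]
      by_cases h : j < k
      · simp only [dif_pos h]; exact measurableSet_singleton _
      · simp only [dif_neg h]; exact MeasurableSet.univ)]
  have h3 : ∀ j ∈ Finset.range k, P (ik j ⁻¹' st j) = (n : ENNReal)⁻¹ := by
    intro j hj
    rw [Finset.mem_range] at hj
    have h4 : ik j ⁻¹' st j = {ω | ik j ω = v ⟨j, hj⟩} := by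
      rw [hst]; simp only [dif_pos hj]; rfl
    rw [h4, hunif]
  rw [Finset.prod_congr rfl h3, Finset.prod_const, Finset.card_range]

variable {ik : ℕ → Ω → Fin n} {P : Measure Ω} [IsProbabilityMeasure P]

lemma comp_repr (k : ℕ) (q : (Fin k → Fin n) → ℝ) (ω : Ω) :
    q (Vk ik k ω) =
      ∑ v : Fin k → Fin n, Set.indicator {ω' | Vk ik k ω' = v} (fun _ => q v) ω := by
  refine Eq.symm ((Finset.sum_eq_single_of_mem (Vk ik k ω) (Finset.mem_univ _)
    (fun v _ hv => Set.indicator_of_notMem (fun hmem => hv (Eq.symm hmem)) _)).trans ?_)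
  exact Set.indicator_of_mem (show ω ∈ {ω' | Vk ik k ω' = Vk ik k ω} from rfl)
    (fun _ => q (Vk ik k ω))

lemma measurable_Av (hmeas : ∀ k, Measurable (ik k)) (k : ℕ) (v : Fin k → Fin n) :
    MeasurableSet {ω' | Vk ik k ω' = v} :=
  (measurable_Vk hmeas k) (measurableSet_singleton v)

lemma integrable_comp (hmeas : ∀ k, Measurable (ik k)) (k : ℕ) (q : (Fin k → Fin n) → ℝ) :
    Integrable (fun ω => q (Vk ik k ω)) P := by
  have h1 : (fun ω => q (Vk ik k ω)) =
      fun ω => ∑ v : Fin k → Fin n, Set.indicator {ω' | Vk ik k ω' = v} (fun _ => q v) ω :=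
    funext (comp_repr k q)
  rw [h1]
  exact integrable_finset_sum _ fun v _ => (integrable_const (q v)).indicator
    (measurable_Av hmeas k v)

lemma integral_comp (hmeas : ∀ k, Measurable (ik k)) (k : ℕ) (q : (Fin k → Fin n) → ℝ) :
    ∫ ω, q (Vk ik k ω) ∂P =
      ∑ v : Fin k → Fin n, (P {ω' | Vk ik k ω' = v}).toReal * q v := by
  have h1 : (fun ω => q (Vk ik k ω)) =
      fun ω => ∑ v : Fin k → Fin n, Set.indicator {ω' | Vk ik k ω' = v} (fun _ => q v) ω :=
    funext (comp_repr k q)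
  rw [h1, integral_finset_sum _ fun v _ => (integrable_const (q v)).indicator
    (measurable_Av hmeas k v)]
  refine Finset.sum_congr rfl fun v _ => ?_
  rw [integral_indicator_const _ (measurable_Av hmeas k v), smul_eq_mul]
  rfl

end Prob


section StepBound
open MeasureTheory Filter
open scoped ENNReal

variable {n : ℕ} {lam : Fin n → ℝ}
  {f : EuclideanSpace ℝ (Fin n) → ℝ}
  {g : EuclideanSpace ℝ (Fin n) → EuclideanSpace ℝ (Fin n)}
  {L : Fin n → ℝ}
  {u : Fin n → ℝ → EuclideanSpace ℝ (Fin n) → ℝ}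
  {gu : Fin n → ℝ → EuclideanSpace ℝ (Fin n) → ℝ}
  {M μ : Fin n → ℝ}
  {T : Fin n → EuclideanSpace ℝ (Fin n) → ℝ}

lemma InvP_PhiS (hu : ScalarApproxAssumption f g L u gu M μ) (hL : ∀ i, 0 < L i)
    (hT : ∀ (i : Fin n) (x : EuclideanSpace ℝ (Fin n)) (y : ℝ),
      u i (T i x) x + lam i * (if T i x ≠ 0 then (1:ℝ) else 0)
        ≤ u i y x + lam i * (if y ≠ 0 then (1:ℝ) else 0))
    (x0 : EuclideanSpace ℝ (Fin n)) :
    ∀ (k : ℕ) (w : Fin k → Fin n), InvP lam μ (sInf (SsetD lam M μ x0)) (PhiS T x0 k w) := by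
  intro k
  induction k with
  | zero => intro w; exact inv_x0 lam M μ x0
  | succ k ih =>
    intro w
    show InvP _ _ _ (stepS T (w (Fin.last k)) (PhiS T x0 k fun j => w j.castSucc))
    exact inv_step hu hL hT x0 _ _ (ih _)

lemma step_bound {Ω : Type*} [MeasurableSpace Ω] {ik : ℕ → Ω → Fin n} {P : Measure Ω}
    [IsProbabilityMeasure P]
    (hmeas : ∀ k, Measurable (ik k))
    (hindep : ProbabilityTheory.iIndepFun ik P)
    (hunif : ∀ (k : ℕ) (i : Fin n), P {ω | ik k ω = i} = (n : ENNReal)⁻¹)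
    (hlam : ∀ i, 0 ≤ lam i)
    (hu : ScalarApproxAssumption f g L u gu M μ) (hL : ∀ i, 0 < L i)
    (hT : ∀ (i : Fin n) (x : EuclideanSpace ℝ (Fin n)) (y : ℝ),
      u i (T i x) x + lam i * (if T i x ≠ 0 then (1:ℝ) else 0)
        ≤ u i y x + lam i * (if y ≠ 0 then (1:ℝ) else 0))
    (x0 : EuclideanSpace ℝ (Fin n)) (k : ℕ) :
    ((n:ℝ)⁻¹ * sInf (SsetD lam M μ x0)) *
        (P {ω | chgS lam T (PhiS T x0 k (Vk ik k ω))}).toReal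
      ≤ ∫ ω, (FnF lam f (PhiS T x0 k (Vk ik k ω))
          - FnF lam f (PhiS T x0 (k+1) (Vk ik (k+1) ω))) ∂P := by
  classical
  set r : ℝ := (n:ℝ)⁻¹ with hr
  set c : ℝ := sInf (SsetD lam M μ x0) with hc
  have hrnn : 0 ≤ r := by positivity
  have htr : ∀ m : ℕ, ((n : ENNReal)⁻¹ ^ m).toReal = r ^ m := by
    intro m
    simp [ENNReal.toReal_pow, ENNReal.toReal_inv, hr, inv_pow]
  -- the integrand as a function of the first k+1 coordinates
  set Q : (Fin (k+1) → Fin n) → ℝ := fun v =>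
    FnF lam f (PhiS T x0 k (fun j => v j.castSucc)) - FnF lam f (PhiS T x0 (k+1) v) with hQ
  have hVcast : ∀ ω : Ω, (fun j : Fin k => Vk ik (k+1) ω j.castSucc) = Vk ik k ω := by
    intro ω; funext j; show ik (j.castSucc : Fin (k+1)).val ω = ik j.val ω
    rw [Fin.coe_castSucc]
  have hint : (fun ω => FnF lam f (PhiS T x0 k (Vk ik k ω))
      - FnF lam f (PhiS T x0 (k+1) (Vk ik (k+1) ω))) = fun ω => Q (Vk ik (k+1) ω) := by
    funext ω
    rw [hQ]
    simp only
    rw [hVcast ω]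
  -- the indicator of a change as a function of the first k coordinates
  set qc : (Fin k → Fin n) → ℝ := fun w =>
    if chgS lam T (PhiS T x0 k w) then (1:ℝ) else 0 with hqc
  have hCpre : {ω | chgS lam T (PhiS T x0 k (Vk ik k ω))}
      = Vk ik k ⁻¹' {w | chgS lam T (PhiS T x0 k w)} := rfl
  have hCmeas : MeasurableSet {ω | chgS lam T (PhiS T x0 k (Vk ik k ω))} := by
    rw [hCpre]
    exact (measurable_Vk hmeas k) ((Set.toFinite _).measurableSet)
  have hPC : (P {ω | chgS lam T (PhiS T x0 k (Vk ik k ω))}).toReal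
      = ∫ ω, qc (Vk ik k ω) ∂P := by
    have h1 : (fun ω => qc (Vk ik k ω)) =
        Set.indicator {ω | chgS lam T (PhiS T x0 k (Vk ik k ω))} (fun _ => (1:ℝ)) := by
      funext ω
      by_cases h : chgS lam T (PhiS T x0 k (Vk ik k ω))
      · rw [hqc]
        simp only [if_pos h]
        exact (Set.indicator_of_mem
          (show ω ∈ {ω' | chgS lam T (PhiS T x0 k (Vk ik k ω'))} from h)
          (fun _ => (1:ℝ))).symm
      · rw [hqc]
        simp only [if_neg h]
        exact (Set.indicator_of_notMem
          (show ω ∉ {ω' | chgS lam T (PhiS T x0 k (Vk ik k ω'))} from h)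
          (fun _ => (1:ℝ))).symm
    rw [h1, integral_indicator_const _ hCmeas, smul_eq_mul, mul_one]
    rfl
  rw [hint, hPC]
  rw [integral_comp hmeas (k+1) Q, integral_comp hmeas k qc]
  have hmv : ∀ (m : ℕ) (v : Fin m → Fin n), (P {ω' | Vk ik m ω' = v}).toReal = r ^ m := by
    intro m v
    rw [measure_Vk hindep hunif m v, htr]
  simp only [hmv]
  -- reindex the (k+1)-fold sum
  rw [sum_snoc' (fun v => r ^ (k+1) * Q v)]
  -- identify the inner terms
  have hQsnoc : ∀ (w : Fin k → Fin n) (i : Fin n),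
      Q (Fin.snoc w i) = FnF lam f (PhiS T x0 k w) - FnF lam f (stepS T i (PhiS T x0 k w)) := by
    intro w i
    rw [hQ]
    simp only
    rw [PhiS_snoc]
    congr 2
    congr 1
    funext j
    simp
  -- pointwise lower bound for each history w
  have hperw : ∀ w : Fin k → Fin n,
      (r * c) * (r ^ k * qc w) ≤ ∑ i : Fin n, r ^ (k+1) * Q (Fin.snoc w i) := by
    intro w
    have hsum : ∑ i : Fin n, r ^ (k+1) * Q (Fin.snoc w i)
        = r ^ (k+1) * ∑ i : Fin n, (FnF lam f (PhiS T x0 k w)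
            - FnF lam f (stepS T i (PhiS T x0 k w))) := by
      rw [Finset.mul_sum]
      exact Finset.sum_congr rfl fun i _ => by rw [hQsnoc]
    rw [hsum]
    have hbound : c * qc w ≤ ∑ i : Fin n, (FnF lam f (PhiS T x0 k w)
        - FnF lam f (stepS T i (PhiS T x0 k w))) := by
      by_cases h : chgS lam T (PhiS T x0 k w)
      · rw [hqc]; simp only [if_pos h, mul_one]
        exact chg_sum_bound hlam hu hL hT x0 _ (InvP_PhiS hu hL hT x0 k w) h
      · rw [hqc]; simp only [if_neg h, mul_zero]
        apply Finset.sum_nonneg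
        intro i _
        have := descent (lam := lam) hu hT i (PhiS T x0 k w)
        nlinarith [sq_nonneg (T i (PhiS T x0 k w) - PhiS T x0 k w i), hu.mu_pos i]
    calc (r * c) * (r ^ k * qc w) = r ^ (k+1) * (c * qc w) := by ring
      _ ≤ r ^ (k+1) * ∑ i : Fin n, (FnF lam f (PhiS T x0 k w)
            - FnF lam f (stepS T i (PhiS T x0 k w))) :=
        mul_le_mul_of_nonneg_left hbound (by positivity)
  calc (r * c) * ∑ w : Fin k → Fin n, r ^ k * qc w
      = ∑ w : Fin k → Fin n, (r * c) * (r ^ k * qc w) := by rw [Finset.mul_sum]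
    _ ≤ ∑ w : Fin k → Fin n, ∑ i : Fin n, r ^ (k+1) * Q (Fin.snoc w i) :=
        Finset.sum_le_sum fun w _ => hperw w
end StepBound



open MeasureTheory Filter in
/-- In the scalar strongly convex case, the (expected) number `κ` of
changes in expectation of `Iᵏ` satisfies `κ·δ ≤ E[F(x⁰) - F(x*)]`, hence
`κ ≤ ⌈E[F(x⁰) - F(x*)]/δ⌉`. -/
theorem statement17 {n : ℕ} (lam : Fin n → ℝ)
    (hlam : ∀ i, 0 ≤ lam i) (hlam_pos : ∃ i, 0 < lam i)
    (f : EuclideanSpace ℝ (Fin n) → ℝ)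
    (g : EuclideanSpace ℝ (Fin n) → EuclideanSpace ℝ (Fin n))
    (hgrad : ∀ x, HasGradientAt f (g x) x)
    (L : Fin n → ℝ) (hL : ∀ i, 0 < L i)
    (hLip : ∀ (i : Fin n) (x : EuclideanSpace ℝ (Fin n)) (t : ℝ),
      |g (x + EuclideanSpace.single i t) i - g x i| ≤ L i * |t|)
    -- strong convexity of `f` with parameter `σ`
    (σ : ℝ) (hσ : 0 < σ)
    (hstrong : ∀ x y : EuclideanSpace ℝ (Fin n),
      f x + ⟪g x, y - x⟫ + σ / 2 * ‖y - x‖ ^ 2 ≤ f y)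
    (u : Fin n → ℝ → EuclideanSpace ℝ (Fin n) → ℝ)
    (gu : Fin n → ℝ → EuclideanSpace ℝ (Fin n) → ℝ)
    (M μ : Fin n → ℝ)
    (hu : ScalarApproxAssumption f g L u gu M μ)
    (T : Fin n → EuclideanSpace ℝ (Fin n) → ℝ)
    (hT : ∀ (i : Fin n) (x : EuclideanSpace ℝ (Fin n)) (y : ℝ),
      u i (T i x) x + lam i * (if T i x ≠ 0 then (1:ℝ) else 0)
        ≤ u i y x + lam i * (if y ≠ 0 then (1:ℝ) else 0))
    -- probability space and i.i.d. uniform coordinate selections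
    {Ω : Type*} [MeasurableSpace Ω] (P : Measure Ω) [IsProbabilityMeasure P]
    (ik : ℕ → Ω → Fin n) (hmeas : ∀ k, Measurable (ik k))
    (hindep : ProbabilityTheory.iIndepFun ik P)
    (hunif : ∀ (k : ℕ) (i : Fin n), P {ω | ik k ω = i} = (n : ENNReal)⁻¹)
    -- the (RCD-IHT) process
    (x0 : EuclideanSpace ℝ (Fin n)) (X : ℕ → Ω → EuclideanSpace ℝ (Fin n))
    (hX0 : ∀ ω, X 0 ω = x0)
    (hXstep : ∀ (k : ℕ) (ω : Ω), X (k + 1) ω = stepS T (ik k ω) (X k ω))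
    (hXmeas : ∀ k, Measurable (X k))
    -- the number of changes in expectation of `Iᵏ`
    (κ : Ω → ℕ) (hκ : ∀ ω, κ ω = Set.ncard {k : ℕ | chgS lam T (X k ω)})
    (hκmeas : Measurable κ)
    -- a limit point `x*` of the sequence
    (xstar : Ω → EuclideanSpace ℝ (Fin n)) (hxstarmeas : Measurable xstar)
    (hxstar : ∀ᵐ ω ∂P, MapClusterPt (xstar ω) atTop (fun k => X k ω))
    (δ : ℝ)
    (hδ : δ = (1 / n : ℝ) * sInf
      ({t : ℝ | ∃ i, 0 < lam i ∧ t = μ i * lam i / M i} ∪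
       {t : ℝ | ∃ j, x0 j ≠ 0 ∧ t = μ j / 2 * (x0 j) ^ 2})) :
    δ * ∫ ω, (κ ω : ℝ) ∂P ≤
        ∫ ω, ((f x0 + l0s lam x0) - (f (xstar ω) + l0s lam (xstar ω))) ∂P ∧
    ∫ ω, (κ ω : ℝ) ∂P ≤
      (⌈(∫ ω, ((f x0 + l0s lam x0) - (f (xstar ω) + l0s lam (xstar ω))) ∂P) / δ⌉₊ : ℝ) := by

  classical
  obtain ⟨i0, hlam0⟩ := hlam_pos
  have hn : 0 < n := i0.pos
  set c : ℝ := sInf (SsetD lam M μ x0) with hc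
  have hδeq : δ = (n:ℝ)⁻¹ * c := by rw [hδ, one_div]; rfl
  have hcmem : c ∈ SsetD lam M μ x0 :=
    (Set.Nonempty.csInf_mem ⟨_, Or.inl ⟨i0, hlam0, rfl⟩⟩ (SsetD_finite lam M μ x0))
  have hcpos : 0 < c := SsetD_pos hlam hu.M_gt_L hL hu.mu_pos x0 _ hcmem
  have hδpos : 0 < δ := by
    rw [hδeq]
    have : (0:ℝ) < (n:ℝ)⁻¹ := by positivity
    exact mul_pos this hcpos
  have hfc : Continuous f :=
    continuous_iff_continuousAt.mpr fun x => (hgrad x).hasFDerivAt.continuousAt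
  have hlsc := Fn_lsc hlam hfc
  -- identification of the process with its deterministic unfolding
  have hXeq : ∀ (k : ℕ) (ω : Ω), X k ω = PhiS T x0 k (Vk ik k ω) := by
    intro k
    induction k with
    | zero => intro ω; exact hX0 ω
    | succ k ih =>
      intro ω
      rw [hXstep k ω, ih ω]
      show stepS T (ik k ω) (PhiS T x0 k (Vk ik k ω))
        = stepS T (Vk ik (k+1) ω (Fin.last k)) (PhiS T x0 k fun j => Vk ik (k+1) ω j.castSucc)
      have h1 : Vk ik (k+1) ω (Fin.last k) = ik k ω := rfl
      have h2 : (fun j : Fin k => Vk ik (k+1) ω j.castSucc) = Vk ik k ω := by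
        funext j
        show ik (j.castSucc : Fin (k+1)).val ω = ik j.val ω
        rw [Fin.coe_castSucc]
      rw [h1, h2]
  -- monotonicity of F along trajectories
  have hmono : ∀ (ω : Ω) (k : ℕ), FnF lam f (X (k+1) ω) ≤ FnF lam f (X k ω) := by
    intro ω k
    rw [hXstep k ω]
    have h1 := descent (lam := lam) hu hT (ik k ω) (X k ω)
    nlinarith [sq_nonneg (T (ik k ω) (X k ω) - X k ω (ik k ω)), hu.mu_pos (ik k ω)]
  have hae : ∀ᵐ ω ∂P, ∀ k, FnF lam f (xstar ω) ≤ FnF lam f (X k ω) := by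
    filter_upwards [hxstar] with ω hω
    intro k
    exact Fn_limit_le hlsc (fun m => X m ω) (xstar ω) (hmono ω) hω k
  -- the expected total decrease
  have hGdef : (fun ω => (f x0 + l0s lam x0) - (f (xstar ω) + l0s lam (xstar ω)))
      = fun ω => FnF lam f x0 - FnF lam f (xstar ω) := rfl
  set B : ℝ := ∫ ω, ((f x0 + l0s lam x0) - (f (xstar ω) + l0s lam (xstar ω))) ∂P with hB
  have hFmeas : Measurable (FnF lam f) := by
    apply Measurable.add hfc.measurable
    apply Finset.measurable_sum
    intro j _
    have hms : MeasurableSet {x : EuclideanSpace ℝ (Fin n) | x j ≠ 0} := by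
      have h0 : {x : EuclideanSpace ℝ (Fin n) | x j ≠ 0}
          = ((fun x : EuclideanSpace ℝ (Fin n) => x j) ⁻¹' {0})ᶜ := rfl
      rw [h0]
      exact (((EuclideanSpace.proj j).continuous.measurable) (measurableSet_singleton (0:ℝ))).compl
    exact Measurable.ite hms measurable_const measurable_const
  have hm := Fn_lower (g := g) hlam hσ (fun y => hstrong x0 y)
  set m : ℝ := f x0 - ‖g x0‖ ^ 2 / (2 * σ) with hmdef
  have hGint : Integrable (fun ω => FnF lam f x0 - FnF lam f (xstar ω)) P := by
    refine ⟨(measurable_const.sub (hFmeas.comp hxstarmeas)).aestronglyMeasurable,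
      HasFiniteIntegral.of_bounded (C := FnF lam f x0 - m) ?_⟩
    filter_upwards [hae] with ω hω
    have h1 := hω 0
    rw [hX0] at h1
    have h2 := hm (xstar ω)
    have h3 := hm x0
    rw [Real.norm_eq_abs, abs_le]
    constructor <;> linarith
  have hBnonneg : 0 ≤ B := by
    rw [hB, hGdef]
    apply integral_nonneg_of_ae
    filter_upwards [hae] with ω hω
    have := hω 0
    rw [hX0] at this
    simp only [Pi.zero_apply]
    linarith
  -- each F∘Xk is integrable
  have hXint : ∀ k : ℕ, Integrable (fun ω => FnF lam f (X k ω)) P := by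
    intro k
    have h1 : (fun ω => FnF lam f (X k ω))
        = fun ω => FnF lam f (PhiS T x0 k (Vk ik k ω)) :=
      funext fun ω => by rw [hXeq k ω]
    rw [h1]
    exact integrable_comp (P := P) hmeas k (fun w => FnF lam f (PhiS T x0 k w))
  -- identification of the change sets
  have hCeq : ∀ k, {ω | chgS lam T (X k ω)} = {ω | chgS lam T (PhiS T x0 k (Vk ik k ω))} := by
    intro k
    ext ω
    rw [Set.mem_setOf_eq, Set.mem_setOf_eq, hXeq k ω]
  have hCmeas : ∀ k, MeasurableSet {ω | chgS lam T (X k ω)} := by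
    intro k
    rw [hCeq k, show {ω | chgS lam T (PhiS T x0 k (Vk ik k ω))}
      = Vk ik k ⁻¹' {w | chgS lam T (PhiS T x0 k w)} from rfl]
    exact (measurable_Vk hmeas k) ((Set.toFinite _).measurableSet)
  -- the key finite-horizon bound
  have key : ∀ K : ℕ, δ * ∑ k ∈ Finset.range K, (P {ω | chgS lam T (X k ω)}).toReal ≤ B := by
    intro K
    have h1 : ∀ k, δ * (P {ω | chgS lam T (X k ω)}).toReal
        ≤ ∫ ω, (FnF lam f (X k ω) - FnF lam f (X (k+1) ω)) ∂P := by
      intro k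
      have h2 := step_bound (lam := lam) (f := f) hmeas hindep hunif hlam hu hL hT x0 k
      rw [← hδeq] at h2
      rw [hCeq k]
      have h3 : (fun ω => FnF lam f (X k ω) - FnF lam f (X (k+1) ω))
          = fun ω => (FnF lam f (PhiS T x0 k (Vk ik k ω))
              - FnF lam f (PhiS T x0 (k+1) (Vk ik (k+1) ω))) :=
        funext fun ω => by rw [hXeq k ω, hXeq (k+1) ω]
      rw [h3]
      exact h2
    calc δ * ∑ k ∈ Finset.range K, (P {ω | chgS lam T (X k ω)}).toReal
        = ∑ k ∈ Finset.range K, δ * (P {ω | chgS lam T (X k ω)}).toReal := by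
          rw [Finset.mul_sum]
      _ ≤ ∑ k ∈ Finset.range K, ∫ ω, (FnF lam f (X k ω) - FnF lam f (X (k+1) ω)) ∂P :=
          Finset.sum_le_sum fun k _ => h1 k
      _ = ∫ ω, (∑ k ∈ Finset.range K, (FnF lam f (X k ω) - FnF lam f (X (k+1) ω))) ∂P :=
          (integral_finset_sum _ fun k _ => (hXint k).sub (hXint (k+1))).symm
      _ = ∫ ω, (FnF lam f x0 - FnF lam f (X K ω)) ∂P := by
          apply integral_congr_ae
          filter_upwards with ω
          rw [Finset.sum_range_sub' (fun k => FnF lam f (X k ω)) K, hX0]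
      _ ≤ B := by
          rw [hB, hGdef]
          apply integral_mono_ae ((integrable_const _).sub (hXint K)) hGint
          filter_upwards [hae] with ω hω
          have := hω K
          simp only [Pi.sub_apply]
          linarith
  -- pass to infinite horizon in ℝ≥0∞
  have hsumE : ∀ K : ℕ, ∑ k ∈ Finset.range K, P {ω | chgS lam T (X k ω)}
      ≤ ENNReal.ofReal (B / δ) := by
    intro K
    have h1 : ∑ k ∈ Finset.range K, (P {ω | chgS lam T (X k ω)}).toReal ≤ B / δ := by
      rw [le_div_iff₀ hδpos]
      rw [mul_comm]
      exact key K
    calc ∑ k ∈ Finset.range K, P {ω | chgS lam T (X k ω)}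
        = ∑ k ∈ Finset.range K, ENNReal.ofReal ((P {ω | chgS lam T (X k ω)}).toReal) :=
          Finset.sum_congr rfl fun k _ => (ENNReal.ofReal_toReal (measure_ne_top P _)).symm
      _ = ENNReal.ofReal (∑ k ∈ Finset.range K, (P {ω | chgS lam T (X k ω)}).toReal) :=
          (ENNReal.ofReal_sum_of_nonneg fun k _ => ENNReal.toReal_nonneg).symm
      _ ≤ ENNReal.ofReal (B / δ) := ENNReal.ofReal_le_ofReal h1
  have htsum : ∑' k, P {ω | chgS lam T (X k ω)} ≤ ENNReal.ofReal (B / δ) := by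
    rw [ENNReal.tsum_eq_iSup_sum]
    apply iSup_le
    intro s
    calc ∑ k ∈ s, P {ω | chgS lam T (X k ω)}
        ≤ ∑ k ∈ Finset.range (s.sup id + 1), P {ω | chgS lam T (X k ω)} :=
          Finset.sum_le_sum_of_subset fun x hx => Finset.mem_range.mpr
            (Nat.lt_succ_of_le (Finset.le_sup (f := id) hx))
      _ ≤ ENNReal.ofReal (B / δ) := hsumE _
  -- κ is dominated by the sum of indicators
  have hκle : ∀ ω, (κ ω : ENNReal)
      ≤ ∑' k, Set.indicator {ω' | chgS lam T (X k ω')} (fun _ => (1 : ENNReal)) ω := by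
    intro ω
    rw [hκ ω]
    by_cases hfin : {k : ℕ | chgS lam T (X k ω)}.Finite
    · have h1 : (({k : ℕ | chgS lam T (X k ω)}.ncard : ENNReal))
          = ∑ k ∈ hfin.toFinset, (1 : ENNReal) := by
        rw [Finset.sum_const, nsmul_eq_mul, mul_one]
        congr 1
        rw [Set.ncard_eq_toFinset_card _ hfin]
      rw [h1]
      have h2 : ∀ k ∈ hfin.toFinset,
          (1 : ENNReal) = Set.indicator {ω' | chgS lam T (X k ω')} (fun _ => (1 : ENNReal)) ω := by
        intro k hk
        rw [Set.Finite.mem_toFinset] at hk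
        exact (Set.indicator_of_mem (show ω ∈ {ω' | chgS lam T (X k ω')} from hk)
          (fun _ => (1 : ENNReal))).symm
      rw [Finset.sum_congr rfl h2]
      exact Summable.sum_le_tsum hfin.toFinset (fun _ _ => zero_le) ENNReal.summable
    · rw [Set.Infinite.ncard hfin]
      simp
  have hlint : ∫⁻ ω, (κ ω : ENNReal) ∂P ≤ ENNReal.ofReal (B / δ) := by
    calc ∫⁻ ω, (κ ω : ENNReal) ∂P
        ≤ ∫⁻ ω, ∑' k, Set.indicator {ω' | chgS lam T (X k ω')} (fun _ => (1 : ENNReal)) ω ∂P :=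
          lintegral_mono hκle
      _ = ∑' k, ∫⁻ ω, Set.indicator {ω' | chgS lam T (X k ω')} (fun _ => (1 : ENNReal)) ω ∂P :=
          lintegral_tsum fun k => (measurable_const.indicator (hCmeas k)).aemeasurable
      _ = ∑' k, P {ω | chgS lam T (X k ω)} := by
          refine tsum_congr fun k => ?_
          rw [lintegral_indicator (hCmeas k)]
          simp
      _ ≤ ENNReal.ofReal (B / δ) := htsum
  have hκint_eq : ∫ ω, (κ ω : ℝ) ∂P = (∫⁻ ω, (κ ω : ENNReal) ∂P).toReal := by
    have hms : Measurable fun ω => ((κ ω : ℝ)) := measurable_from_top.comp hκmeas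
    rw [integral_eq_lintegral_of_nonneg_ae (Filter.Eventually.of_forall fun ω => by positivity)
      hms.aestronglyMeasurable]
    congr 1
    apply lintegral_congr
    intro ω
    exact ENNReal.ofReal_natCast _
  have hκfinal : ∫ ω, (κ ω : ℝ) ∂P ≤ B / δ := by
    rw [hκint_eq]
    calc (∫⁻ ω, (κ ω : ENNReal) ∂P).toReal
        ≤ (ENNReal.ofReal (B / δ)).toReal := ENNReal.toReal_mono ENNReal.ofReal_ne_top hlint
      _ = B / δ := ENNReal.toReal_ofReal (div_nonneg hBnonneg hδpos.le)
  constructor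
  · have := (le_div_iff₀ hδpos).mp hκfinal
    linarith
  · exact le_trans hκfinal (Nat.le_ceil _)
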